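/- arXiv:2311.18586 — 10 statements merged into one kernel-verified Lean document; each statement's English description precedes it below -/
import Mathlib

section
/- Let X be a Banach space, let φ : X → ℝ ∪ {+∞} be a proper lower semicontinuous function, and let x̄ ∈ dom φ. If φ is prox-bounded and the zero functional 0 ∈ X* is a proximal subgradient of φ at x̄, then there exists λ₀ > 0 such that for every λ with 0 < λ < λ₀ the proximal mapping is single-valued at x̄ with P_λφ(x̄) = {x̄}. -/
open Filter Topology

variable {X : Type*}

/-- Moreau envelope `e_λφ(x) = inf_w { φ(w) + (1/(2λ))‖w − x‖² }`, valued in `EReal`. -/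
noncomputable def moreauEnv [NormedAddCommGroup X] (lam : ℝ) (φ : X → EReal) (x : X) : EReal :=
  ⨅ w : X, φ w + (((1 / (2 * lam)) * ‖w - x‖ ^ 2 : ℝ) : EReal)

/-- Proximal mapping `P_λφ(x) = argmin_w { φ(w) + (1/(2λ))‖w − x‖² }`. -/
def proxSet [NormedAddCommGroup X] (lam : ℝ) (φ : X → EReal) (x : X) : Set X :=
  {w : X | ∀ v : X,
    φ w + (((1 / (2 * lam)) * ‖w - x‖ ^ 2 : ℝ) : EReal)
      ≤ φ v + (((1 / (2 * lam)) * ‖v - x‖ ^ 2 : ℝ) : EReal)}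

/-- A function `X → ℝ ∪ {+∞}` modeled as `X → EReal`: proper means not identically `+∞`
and never `−∞`. -/
def IsProper [NormedAddCommGroup X] (φ : X → EReal) : Prop :=
  (∃ x : X, φ x ≠ ⊤) ∧ ∀ x : X, φ x ≠ ⊥

/-- Prox-boundedness: `φ(y) ≥ α‖y − x̄‖² + β` for some `α, β ∈ ℝ`, `x̄ ∈ X`. -/
def ProxBounded [NormedAddCommGroup X] (φ : X → EReal) : Prop :=
  ∃ (a b : ℝ) (x0 : X), ∀ y : X, ((a * ‖y - x0‖ ^ 2 + b : ℝ) : EReal) ≤ φ y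

/-- Weak convergence of a sequence: `⟨f, u k⟩ → ⟨f, x⟩` for every continuous linear functional. -/
def WeakConv [NormedAddCommGroup X] [NormedSpace ℝ X] (u : ℕ → X) (x : X) : Prop :=
  ∀ f : X →L[ℝ] ℝ, Tendsto (fun k => f (u k)) atTop (𝓝 (f x))

/-- Weak sequential lower semicontinuity. -/
def WeakSeqLSC [NormedAddCommGroup X] [NormedSpace ℝ X] (φ : X → EReal) : Prop :=
  ∀ (x : X) (u : ℕ → X), WeakConv u x → φ x ≤ liminf (fun k => φ (u k)) atTop

/-- Sequential form of reflexivity: every bounded sequence has a weakly convergent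
subsequence. -/
def SeqReflexive (X : Type*) [NormedAddCommGroup X] [NormedSpace ℝ X] : Prop :=
  ∀ u : ℕ → X, (∃ C : ℝ, ∀ k, ‖u k‖ ≤ C) →
    ∃ (s : ℕ → ℕ) (z : X), StrictMono s ∧ WeakConv (u ∘ s) z

/-- Local minimizer. -/
def LocalMin [NormedAddCommGroup X] (g : X → EReal) (x0 : X) : Prop :=
  ∃ ε > (0 : ℝ), ∀ x : X, ‖x - x0‖ < ε → g x0 ≤ g x

/-- Strong local minimizer with modulus `σ`. -/
def StrongLocalMin [NormedAddCommGroup X] (g : X → EReal) (x0 : X) (σ : ℝ) : Prop :=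
  ∃ ε > (0 : ℝ), ∀ x : X, ‖x - x0‖ < ε →
    g x0 + (((σ / 2) * ‖x - x0‖ ^ 2 : ℝ) : EReal) ≤ g x

/-- The zero functional `0 ∈ X*` is a proximal subgradient of `φ` at `x0`. -/
def ZeroProxSubgradient [NormedAddCommGroup X] [NormedSpace ℝ X] (φ : X → EReal) (x0 : X) :
    Prop :=
  ∃ r > (0 : ℝ), ∃ ε > (0 : ℝ), ∀ x : X, ‖x - x0‖ < ε →
    φ x0 + ((((0 : X →L[ℝ] ℝ) (x - x0)) - (r / 2) * ‖x - x0‖ ^ 2 : ℝ) : EReal) ≤ φ x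

set_option maxHeartbeats 1000000 in
/-- prox-boundedness plus `0` being a proximal subgradient at `x̄` imply
`P_λφ(x̄) = {x̄}` for all small `λ > 0`. -/
theorem statement2 [NormedAddCommGroup X] [NormedSpace ℝ X] [CompleteSpace X]
    (φ : X → EReal) (hproper : IsProper φ) (hlsc : LowerSemicontinuous φ)
    (xb : X) (hdom : φ xb ≠ ⊤)
    (hpb : ProxBounded φ) (hsub : ZeroProxSubgradient φ xb) :
    ∃ lam0 > (0 : ℝ), ∀ lam : ℝ, 0 < lam → lam < lam0 → proxSet lam φ xb = {xb} := by
  obtain ⟨a, b, x0, hpb⟩ := hpb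
  obtain ⟨r, hr, ε, hε, hsub⟩ := hsub
  set M := (φ xb).toReal with hMdef
  have hφxb : φ xb = (M : EReal) := (EReal.coe_toReal hdom (hproper.2 xb)).symm
  set a' := min a 0 with ha'
  have ha'a : a' ≤ a := min_le_left _ _
  have ha'0 : a' ≤ 0 := min_le_right _ _
  set d := ‖xb - x0‖ with hd
  set c₀ := max (r + 1) (max (-2 * a' + 1) ((M - 2 * a' * d ^ 2 - b) / ε ^ 2 - 2 * a' + 1))
    with hc₀def
  have hc₀pos : (0 : ℝ) < c₀ := lt_of_lt_of_le (by linarith) (le_max_left _ _)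
  refine ⟨1 / (2 * c₀), by positivity, fun lam hlam hlt => ?_⟩
  set c := 1 / (2 * lam) with hc
  have hcc : c₀ < c := by
    rw [hc, lt_div_iff₀ (by positivity)]
    have h1 : c₀ * (2 * lam) < c₀ * (2 * (1 / (2 * c₀))) :=
      mul_lt_mul_of_pos_left (by linarith) hc₀pos
    have h2 : c₀ * (2 * (1 / (2 * c₀))) = 1 := by field_simp
    linarith
  have hcr : r / 2 < c := by
    have := lt_of_le_of_lt (le_max_left _ _) hcc; linarith
  have h2ac : (0 : ℝ) < 2 * a' + c := by
    have := lt_of_le_of_lt (le_trans (le_max_left _ _) (le_max_right _ _)) hcc; linarith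
  have hfarR : M < (2 * a' + c) * ε ^ 2 + 2 * a' * d ^ 2 + b := by
    have h1 : (M - 2 * a' * d ^ 2 - b) / ε ^ 2 - 2 * a' + 1 < c :=
      lt_of_le_of_lt (le_trans (le_max_right _ _) (le_max_right _ _)) hcc
    have h2 : (M - 2 * a' * d ^ 2 - b) / ε ^ 2 < 2 * a' + c - 1 := by linarith
    have h3 : M - 2 * a' * d ^ 2 - b < (2 * a' + c - 1) * ε ^ 2 := by
      rw [div_lt_iff₀ (by positivity)] at h2; linarith
    nlinarith [sq_nonneg ε]
  -- far bound
  have hfarE : ∀ v : X, ε ≤ ‖v - xb‖ →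
      (M : EReal) < φ v + ((c * ‖v - xb‖ ^ 2 : ℝ) : EReal) := by
    intro v hv
    set t := ‖v - xb‖ with ht
    have hlow : ((a * ‖v - x0‖ ^ 2 + b : ℝ) : EReal) ≤ φ v := hpb v
    have hreal : M < a * ‖v - x0‖ ^ 2 + b + c * t ^ 2 := by
      have htri : ‖v - x0‖ ≤ t + d := by
        have : v - x0 = (v - xb) + (xb - x0) := by abel
        rw [this]; exact norm_add_le _ _
      have hn0 : (0:ℝ) ≤ ‖v - x0‖ := norm_nonneg _
      have hsq : ‖v - x0‖ ^ 2 ≤ 2 * t ^ 2 + 2 * d ^ 2 := by nlinarith [sq_nonneg (t - d)]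
      have ha'sq : a' * (2 * t ^ 2 + 2 * d ^ 2) ≤ a' * ‖v - x0‖ ^ 2 :=
        mul_le_mul_of_nonpos_left hsq ha'0
      have haa : a' * ‖v - x0‖ ^ 2 ≤ a * ‖v - x0‖ ^ 2 :=
        mul_le_mul_of_nonneg_right ha'a (by positivity)
      have hmono : (2 * a' + c) * ε ^ 2 ≤ (2 * a' + c) * t ^ 2 := by
        have : ε ^ 2 ≤ t ^ 2 := by nlinarith
        exact mul_le_mul_of_nonneg_left this (le_of_lt h2ac)
      nlinarith
    calc (M : EReal) < ((a * ‖v - x0‖ ^ 2 + b + c * t ^ 2 : ℝ) : EReal) :=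
          EReal.coe_lt_coe_iff.mpr hreal
      _ = ((a * ‖v - x0‖ ^ 2 + b : ℝ) : EReal) + ((c * t ^ 2 : ℝ) : EReal) := by
          rw [← EReal.coe_add]
      _ ≤ φ v + ((c * t ^ 2 : ℝ) : EReal) := add_le_add_left hlow _
  -- near bound
  have hnearE : ∀ v : X, ‖v - xb‖ < ε →
      ((M + (c - r / 2) * ‖v - xb‖ ^ 2 : ℝ) : EReal) ≤ φ v + ((c * ‖v - xb‖ ^ 2 : ℝ) : EReal) := by
    intro v hv
    have h1 := hsub v hv
    rw [hφxb] at h1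
    simp only [ContinuousLinearMap.zero_apply, zero_sub] at h1
    have h1' : ((M + (-(r / 2 * ‖v - xb‖ ^ 2)) : ℝ) : EReal) ≤ φ v := by
      rw [EReal.coe_add]; exact h1
    calc ((M + (c - r / 2) * ‖v - xb‖ ^ 2 : ℝ) : EReal)
        = ((M + (-(r / 2 * ‖v - xb‖ ^ 2)) : ℝ) : EReal) + ((c * ‖v - xb‖ ^ 2 : ℝ) : EReal) := by
          rw [← EReal.coe_add]; norm_cast; ring
      _ ≤ φ v + ((c * ‖v - xb‖ ^ 2 : ℝ) : EReal) := add_le_add_left h1' _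
  ext w
  simp only [proxSet, Set.mem_setOf_eq, Set.mem_singleton_iff, ← hc]
  constructor
  · intro hw
    have h := hw xb
    rw [hφxb] at h
    simp only [sub_self, norm_zero] at h
    have hzero : ((c * (0:ℝ) ^ 2 : ℝ) : EReal) = ((0:ℝ) : EReal) := by norm_num
    rw [hzero] at h
    have h' : φ w + ((c * ‖w - xb‖ ^ 2 : ℝ) : EReal) ≤ (M : EReal) := by
      calc φ w + ((c * ‖w - xb‖ ^ 2 : ℝ) : EReal) ≤ (M : EReal) + ((0:ℝ) : EReal) := h
        _ = (M : EReal) := by norm_num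
    by_cases hcase : ‖w - xb‖ < ε
    · have h2 := le_trans (hnearE w hcase) h'
      have h3 : M + (c - r / 2) * ‖w - xb‖ ^ 2 ≤ M := EReal.coe_le_coe_iff.mp h2
      have h4 : (c - r / 2) * ‖w - xb‖ ^ 2 ≤ 0 := by linarith
      have hpos : 0 < c - r / 2 := by linarith
      have h5 : ‖w - xb‖ ^ 2 ≤ 0 := by
        by_contra hcon
        push_neg at hcon
        exact absurd h4 (not_le.mpr (mul_pos hpos hcon))
      have h7 : ‖w - xb‖ ^ 2 = 0 := le_antisymm h5 (sq_nonneg _)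
      have h8 : ‖w - xb‖ = 0 := by
        rwa [pow_eq_zero_iff (two_ne_zero)] at h7
      exact sub_eq_zero.mp (norm_eq_zero.mp h8)
    · exact absurd (lt_of_lt_of_le (hfarE w (le_of_not_gt hcase)) h') (lt_irrefl _)
  · intro hw
    rw [hw]
    intro v
    rw [hφxb]
    simp only [sub_self, norm_zero]
    have hzero : ((c * (0:ℝ) ^ 2 : ℝ) : EReal) = ((0:ℝ) : EReal) := by norm_num
    rw [hzero]
    have hM0 : (M : EReal) + ((0:ℝ) : EReal) = (M : EReal) := by norm_num
    rw [hM0]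
    by_cases hcase : ‖v - xb‖ < ε
    · refine le_trans ?_ (hnearE v hcase)
      apply EReal.coe_le_coe_iff.mpr
      nlinarith [sq_nonneg ‖v - xb‖]
    · exact le_of_lt (hfarE v (le_of_not_gt hcase))
end

section
/- Let X be a reflexive Banach space and let φ : X → ℝ ∪ {+∞} be a proper, weakly sequentially lower semicontinuous function. Let λ > 0 be such that there exist λ₁ > λ and x₀ ∈ X with e_{λ₁}φ(x₀) > −∞ (i.e., λ is below the threshold of prox-boundedness of φ). Then for every x ∈ X the proximal set P_λφ(x) is nonempty. -/
open Filter Topology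

variable {X : Type*}

lemma aux_sub_lt (a : EReal) (r t : ℝ) (h : (t:EReal) < a + (r:ℝ)) : ((t - r : ℝ):EReal) < a := by
  induction a using EReal.rec with
  | bot => simp at h
  | top => exact EReal.coe_lt_top _
  | coe p => rw [← EReal.coe_add] at h; exact_mod_cast by linarith [EReal.coe_lt_coe_iff.mp h]

lemma aux_add_real (a : EReal) (p r : ℝ) (h : (p:EReal) ≤ a + (r:ℝ)) (q : ℝ) :
    ((p + q : ℝ):EReal) ≤ a + ((r + q : ℝ):EReal) := by
  rw [EReal.coe_add, EReal.coe_add, ← add_assoc]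
  exact add_le_add_left h _

set_option maxHeartbeats 1000000 in
/-- in a (sequentially) reflexive Banach space, for a proper weakly
sequentially l.s.c. function and `λ` below the prox-boundedness threshold, the proximal
set `P_λφ(x)` is nonempty for every `x`. -/
theorem statement5 [NormedAddCommGroup X] [NormedSpace ℝ X] [CompleteSpace X]
    (hrefl : SeqReflexive X)
    (φ : X → EReal) (hproper : IsProper φ) (hwlsc : WeakSeqLSC φ)
    (lam lam1 : ℝ) (x0 : X) (h0 : 0 < lam) (h1 : lam < lam1)
    (hfin : moreauEnv lam1 φ x0 ≠ ⊥) :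
    ∀ x : X, (proxSet lam φ x).Nonempty := by
  intro x
  obtain ⟨⟨v0, hv0⟩, hnb⟩ := hproper
  have hlam1 : 0 < lam1 := h0.trans h1
  set c : ℝ := 1 / (2 * lam) with hc
  set c1 : ℝ := 1 / (2 * lam1) with hc1
  have hcpos : 0 < c := by positivity
  have hc1pos : 0 < c1 := by positivity
  have hcc1 : c1 < c := by
    rw [hc, hc1]
    exact one_div_lt_one_div_of_lt (by linarith) (by linarith)
  set ε : ℝ := c - c1 with hε
  have hεpos : 0 < ε := by simp only [hε]; linarith
  set D : ℝ := ‖x - x0‖ with hD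
  have hD0 : 0 ≤ D := norm_nonneg _
  -- real lower bound m on the λ₁-envelope
  obtain ⟨m, hm⟩ : ∃ m : ℝ, (m:EReal) ≤ moreauEnv lam1 φ x0 := by
    rcases eq_top_or_lt_top (moreauEnv lam1 φ x0) with h | h
    · exact ⟨0, h ▸ le_top⟩
    · lift moreauEnv lam1 φ x0 to ℝ using ⟨h.ne, hfin⟩ with r hr
      exact ⟨r, le_refl _⟩
  have hmw : ∀ w, (m : EReal) ≤ φ w + ((c1 * ‖w - x0‖ ^ 2 : ℝ):EReal) :=
    fun w => hm.trans (iInf_le _ w)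
  set g : X → EReal := fun w => φ w + ((c * ‖w - x‖ ^ 2 : ℝ):EReal) with hg
  -- distance comparison
  have hqr : ∀ w : X, ‖w - x0‖ ≤ ‖w - x‖ + D := by
    intro w
    have : w - x0 = (w - x) + (x - x0) := by abel
    rw [this, hD]; exact norm_add_le _ _
  -- key real lower bound on g
  have gbound : ∀ w, ((m + (c * ‖w - x‖ ^ 2 - c1 * ‖w - x0‖ ^ 2) : ℝ):EReal) ≤ g w := by
    intro w
    have h2 := aux_add_real (φ w) m (c1 * ‖w - x0‖ ^ 2) (hmw w)
      (c * ‖w - x‖ ^ 2 - c1 * ‖w - x0‖ ^ 2)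
    simpa [hg] using h2
  -- μ is a real number
  set μ : EReal := ⨅ w, g w with hμ
  set t1 : ℝ := c1 ^ 2 * D ^ 2 / ε with ht1
  have hεt1 : ε * t1 = c1 ^ 2 * D ^ 2 := mul_div_cancel₀ _ hεpos.ne'
  have lbμ : ((m - c1 * D ^ 2 - t1 : ℝ):EReal) ≤ μ := by
    apply le_iInf
    intro w
    refine le_trans ?_ (gbound w)
    apply EReal.coe_le_coe_iff.mpr
    set r := ‖w - x‖
    set q := ‖w - x0‖
    have hq := hqr w
    have hq0 : 0 ≤ q := norm_nonneg _
    have hr0 : 0 ≤ r := norm_nonneg _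
    have hq2 : q ^ 2 ≤ (r + D) ^ 2 := by nlinarith
    have s1 : ε * r ^ 2 - 2 * c1 * D * r - c1 * D ^ 2 ≤ c * r ^ 2 - c1 * q ^ 2 := by
      nlinarith
    have s3 : 0 ≤ ε * r ^ 2 - 2 * c1 * D * r + t1 := by
      have h4 : 0 ≤ ε * (ε * r ^ 2 - 2 * c1 * D * r + t1) := by
        nlinarith [sq_nonneg (ε * r - c1 * D)]
      nlinarith
    linarith
  have hμbot : μ ≠ ⊥ := fun h => EReal.coe_ne_bot _ (le_bot_iff.mp (h ▸ lbμ))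
  have hμtop : μ ≠ ⊤ := by
    have : μ ≤ g v0 := iInf_le _ v0
    have h2 : g v0 < ⊤ := EReal.add_lt_top hv0 (EReal.coe_ne_top _)
    exact (this.trans_lt h2).ne
  obtain ⟨μ0, hμ0⟩ : ∃ r : ℝ, μ = (r:EReal) := by
    lift μ to ℝ using ⟨hμtop, hμbot⟩ with r hr
    exact ⟨r, rfl⟩
  -- minimizing sequence
  have hsel : ∀ k : ℕ, ∃ w, g w < ((μ0 + 1 / ((k:ℝ) + 1) : ℝ):EReal) := by
    intro k
    have hlt : μ < ((μ0 + 1 / ((k:ℝ) + 1) : ℝ):EReal) := by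
      rw [hμ0]
      apply EReal.coe_lt_coe_iff.mpr
      have hp : (0:ℝ) < 1 / ((k:ℝ) + 1) := by positivity
      linarith
    exact iInf_lt_iff.mp hlt
  choose u hu using hsel
  -- boundedness of the minimizing sequence
  set M' : ℝ := ε * (μ0 + 1 - m + c1 * D ^ 2) + 2 * c1 ^ 2 * D ^ 2 with hM'
  set C : ℝ := Real.sqrt (2 * M' / ε ^ 2) + ‖x‖ with hC
  have hub : ∀ k, ‖u k‖ ≤ C := by
    intro k
    have hle : ((m + (c * ‖u k - x‖ ^ 2 - c1 * ‖u k - x0‖ ^ 2) : ℝ):EReal)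
        ≤ ((μ0 + 1 : ℝ):EReal) := by
      refine (gbound _).trans ((hu k).le.trans ?_)
      apply EReal.coe_le_coe_iff.mpr
      have : 1 / ((k:ℝ) + 1) ≤ 1 := by
        apply div_le_one_of_le₀ <;> [linarith [Nat.cast_nonneg (α := ℝ) k]; positivity]
      linarith
    have h1' : m + (c * ‖u k - x‖ ^ 2 - c1 * ‖u k - x0‖ ^ 2) ≤ μ0 + 1 :=
      EReal.coe_le_coe_iff.mp hle
    set r := ‖u k - x‖
    set q := ‖u k - x0‖
    have hq := hqr (u k)
    have hq0 : 0 ≤ q := norm_nonneg _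
    have hr0 : 0 ≤ r := norm_nonneg _
    have hq2 : q ^ 2 ≤ (r + D) ^ 2 := by nlinarith
    have step1 : ε * r ^ 2 ≤ (μ0 + 1 - m) + c1 * D ^ 2 + 2 * c1 * D * r := by nlinarith
    have step2 : ε ^ 2 * r ^ 2 ≤ 2 * M' := by
      nlinarith [sq_nonneg (ε * r - 2 * c1 * D),
        mul_le_mul_of_nonneg_left step1 hεpos.le]
    have hr2 : r ^ 2 ≤ 2 * M' / ε ^ 2 := by
      rw [le_div_iff₀ (by positivity)]; linarith [step2]
    have hrs : r ≤ Real.sqrt (2 * M' / ε ^ 2) := by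
      rw [Real.le_sqrt hr0 (by nlinarith)]
      exact hr2
    have : ‖u k‖ ≤ r + ‖x‖ := by
      calc ‖u k‖ = ‖(u k - x) + x‖ := by rw [sub_add_cancel]
        _ ≤ r + ‖x‖ := norm_add_le _ _
    rw [hC]; linarith
  -- weakly convergent subsequence
  obtain ⟨s, z, hs, hwz⟩ := hrefl u ⟨C, hub⟩
  -- convergent subsequence of norms
  have hCnn : 0 ≤ C := le_trans (norm_nonneg (u 0)) (hub 0)
  have hmem : ∀ k, ‖u (s k) - x‖ ∈ Set.Icc (0:ℝ) (C + ‖x‖) := by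
    intro k
    refine ⟨norm_nonneg _, ?_⟩
    calc ‖u (s k) - x‖ ≤ ‖u (s k)‖ + ‖x‖ := norm_sub_le _ _
      _ ≤ C + ‖x‖ := by linarith [hub (s k)]
  obtain ⟨L, _, t, ht, hL⟩ := isCompact_Icc.tendsto_subseq hmem
  set u2 : ℕ → X := fun k => u (s (t k)) with hu2
  have hL' : Tendsto (fun k => ‖u2 k - x‖) atTop (𝓝 L) := hL
  have hL0 : 0 ≤ L := ge_of_tendsto' hL' (fun k => norm_nonneg _)
  have hwu2 : WeakConv u2 z := by
    intro f
    exact (hwz f).comp ht.tendsto_atTop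
  -- weak lsc of the norm: ‖z - x‖ ≤ L
  have hzxL : ‖z - x‖ ≤ L := by
    rcases eq_or_ne (z - x) 0 with h | h
    · rw [h, norm_zero]; exact hL0
    · obtain ⟨f, hf1, hfx⟩ := exists_dual_vector ℝ (z - x) (norm_ne_zero_iff.mpr h)
      have h1 : Tendsto (fun k => f (u2 k - x)) atTop (𝓝 (f (z - x))) := by
        have := (hwu2 f).sub (tendsto_const_nhds (x := f x))
        simpa [map_sub] using this
      have h2 : ∀ k, f (u2 k - x) ≤ ‖u2 k - x‖ := by
        intro k
        calc f (u2 k - x) ≤ |f (u2 k - x)| := le_abs_self _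
          _ ≤ ‖f‖ * ‖u2 k - x‖ := f.le_opNorm _
          _ = ‖u2 k - x‖ := by rw [hf1, one_mul]
      have := le_of_tendsto_of_tendsto' h1 hL' h2
      rwa [hfx] at this
  -- z is a global minimizer of g
  have key : φ z + ((c * ‖z - x‖ ^ 2 : ℝ):EReal) ≤ μ := by
    by_contra hk
    push_neg at hk
    obtain ⟨t0, ht0μ, ht0A⟩ := EReal.exists_between_coe_real hk
    have hμ0t0 : μ0 < t0 := by
      rw [hμ0] at ht0μ; exact_mod_cast ht0μ
    set δ : ℝ := (t0 - μ0) / 2 with hδ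
    have hδpos : 0 < δ := by rw [hδ]; linarith
    set β : ℝ := t0 - c * L ^ 2 with hβdef
    have hβφ : (β:EReal) < φ z := by
      have hA : (t0:EReal) < φ z + ((c * L ^ 2 : ℝ):EReal) := by
        refine ht0A.trans_le (add_le_add_right ?_ _)
        apply EReal.coe_le_coe_iff.mpr
        exact mul_le_mul_of_nonneg_left (pow_le_pow_left₀ (norm_nonneg _) hzxL 2) hcpos.le
      exact aux_sub_lt (φ z) (c * L ^ 2) t0 hA
    have hliminf : φ z ≤ liminf (fun k => φ (u2 k)) atTop := hwlsc z u2 hwu2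
    have hev1 : ∀ᶠ k in atTop, (β:EReal) < φ (u2 k) :=
      eventually_lt_of_lt_liminf (hβφ.trans_le hliminf)
        (isBoundedUnder_of ⟨⊥, fun _ => bot_le⟩)
    have hev2 : ∀ᶠ k in atTop, c * L ^ 2 - δ < c * ‖u2 k - x‖ ^ 2 := by
      have h3 : Tendsto (fun k => c * ‖u2 k - x‖ ^ 2) atTop (𝓝 (c * L ^ 2)) :=
        (hL'.pow 2).const_mul c
      exact h3.eventually (eventually_gt_nhds (by linarith))
    have hev3 : ∀ᶠ k in atTop, 1 / ((s (t k) : ℝ) + 1) < δ := by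
      have h4 : Tendsto (fun k : ℕ => 1 / ((k:ℝ) + 1)) atTop (𝓝 0) :=
        tendsto_one_div_add_atTop_nhds_zero_nat
      filter_upwards [h4.eventually (eventually_lt_nhds hδpos)] with k hk4
      have hmono : (k:ℝ) + 1 ≤ (s (t k) : ℝ) + 1 := by
        have : k ≤ s (t k) := le_trans (ht.le_apply) (hs.le_apply)
        exact_mod_cast Nat.succ_le_succ this
      have : 1 / ((s (t k) : ℝ) + 1) ≤ 1 / ((k:ℝ) + 1) :=
        one_div_le_one_div_of_le (by positivity) hmono
      linarith
    obtain ⟨k, h1, h2, h3⟩ := (hev1.and (hev2.and hev3)).exists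
    -- lower bound on g (u2 k)
    have hlow : ((t0 - δ : ℝ):EReal) < g (u2 k) := by
      have h5 : (β:EReal) + ((c * ‖u2 k - x‖ ^ 2 : ℝ):EReal)
          < φ (u2 k) + ((c * ‖u2 k - x‖ ^ 2 : ℝ):EReal) :=
        EReal.add_lt_add_right_coe h1 _
      refine lt_of_lt_of_le ?_ h5.le
      rw [← EReal.coe_add]
      apply EReal.coe_lt_coe_iff.mpr
      rw [hβdef]; linarith
    -- upper bound on g (u2 k)
    have hhigh : g (u2 k) < ((t0 - δ : ℝ):EReal) := by
      refine (hu (s (t k))).trans ?_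
      apply EReal.coe_lt_coe_iff.mpr
      rw [hδ]; linarith
    exact absurd hlow (lt_asymm hhigh)
  -- conclude
  refine ⟨z, fun v => ?_⟩
  calc φ z + (((1 / (2 * lam)) * ‖z - x‖ ^ 2 : ℝ):EReal) = g z := rfl
    _ ≤ μ := key
    _ ≤ g v := iInf_le _ v
    _ = φ v + (((1 / (2 * lam)) * ‖v - x‖ ^ 2 : ℝ):EReal) := rfl
end

section
/- Let X be a reflexive Banach space and let φ : X → ℝ ∪ {+∞} be a proper, weakly sequentially lower semicontinuous function. Let λ > 0 be such that there exist λ₁ > λ and x₀ ∈ X with e_{λ₁}φ(x₀) > −∞. If (x_k) is a sequence converging strongly to x̄ ∈ X and w_k ∈ P_λφ(x_k) for every k, then the sequence (w_k) is bounded in X. -/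
open Filter Topology

variable {X : Type*}

/-- Auxiliary quadratic bound over the reals. -/
lemma aux_quad_bound (A b Kp t : ℝ) (hA : 0 < A) (hKp : 0 ≤ Kp) (hb : 0 ≤ b)
    (ht : 0 ≤ t) (h : A * t ^ 2 ≤ Kp + b * t) :
    t ^ 2 ≤ (2 * A * Kp + b ^ 2) / A ^ 2 := by
  rw [le_div_iff₀ (by positivity : (0:ℝ) < A ^ 2)]
  nlinarith [sq_nonneg (A * t - b), mul_le_mul_of_nonneg_left h hA.le]

/-- boundedness of sequences of proximal points along a strongly convergent
sequence of base points. -/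
theorem statement6 [NormedAddCommGroup X] [NormedSpace ℝ X] [CompleteSpace X]
    (hrefl : SeqReflexive X)
    (φ : X → EReal) (hproper : IsProper φ) (hwlsc : WeakSeqLSC φ)
    (lam lam1 : ℝ) (x0 : X) (h0 : 0 < lam) (h1 : lam < lam1)
    (hfin : moreauEnv lam1 φ x0 ≠ ⊥)
    (x : ℕ → X) (xb : X) (hx : Tendsto x atTop (𝓝 xb))
    (w : ℕ → X) (hw : ∀ k, w k ∈ proxSet lam φ (x k)) :
    ∃ C : ℝ, ∀ k, ‖w k‖ ≤ C := by
  obtain ⟨⟨v0, hv0⟩, hbot⟩ := hproper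
  have hlam1 : (0:ℝ) < lam1 := h0.trans h1
  obtain ⟨c, hcdef⟩ : ∃ c : ℝ, c = 1 / (2 * lam) := ⟨_, rfl⟩
  obtain ⟨c1, hc1def⟩ : ∃ c1 : ℝ, c1 = 1 / (2 * lam1) := ⟨_, rfl⟩
  have hcpos : 0 < c := by rw [hcdef]; positivity
  have hc1pos : 0 < c1 := by rw [hc1def]; positivity
  have hA : 0 < c - c1 := by
    have h2 : c1 < c := by
      rw [hcdef, hc1def]
      apply one_div_lt_one_div_of_lt <;> nlinarith
    linarith
  -- lower bound for the lam1-envelope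
  obtain ⟨m, hm⟩ : ∃ m : ℝ, (m : EReal) ≤ moreauEnv lam1 φ x0 := by
    by_cases htop : moreauEnv lam1 φ x0 = ⊤
    · exact ⟨0, by simp [htop]⟩
    · exact ⟨(moreauEnv lam1 φ x0).toReal, by rw [EReal.coe_toReal htop hfin]⟩
  have hmw : ∀ v : X, (m : EReal) ≤ φ v + ((c1 * ‖v - x0‖ ^ 2 : ℝ) : EReal) := by
    intro v
    rw [hc1def]
    refine hm.trans ?_
    unfold moreauEnv
    exact iInf_le _ v
  -- boundedness of x k
  obtain ⟨R, hR⟩ : ∃ R : ℝ, ∀ k, ‖x k‖ ≤ R := by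
    have hb : BddAbove (Set.range fun k => ‖x k‖) := (hx.norm).bddAbove_range
    obtain ⟨R, hR⟩ := hb
    exact ⟨R, fun k => hR (Set.mem_range_self k)⟩
  -- φ (w k) is finite
  have hwk_ne_top : ∀ k, φ (w k) ≠ ⊤ := by
    intro k h
    have h2 := hw k v0
    rw [h, EReal.top_add_coe] at h2
    have hlt : φ v0 + ((1 / (2 * lam) * ‖v0 - x k‖ ^ 2 : ℝ) : EReal) < ⊤ :=
      EReal.add_lt_top hv0 (EReal.coe_ne_top _)
    exact absurd (top_le_iff.1 h2) hlt.ne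
  obtain ⟨p, hpdef⟩ : ∃ p : ℕ → ℝ, ∀ k, p k = (φ (w k)).toReal := ⟨_, fun _ => rfl⟩
  obtain ⟨q, hqdef⟩ : ∃ q : ℝ, q = (φ v0).toReal := ⟨_, rfl⟩
  have hbv0 : φ v0 ≠ ⊥ := hbot v0
  have hφw : ∀ k, φ (w k) = ((p k : ℝ) : EReal) := fun k => by
    rw [hpdef]; exact (EReal.coe_toReal (hwk_ne_top k) (hbot _)).symm
  have hφv : φ v0 = ((q : ℝ) : EReal) := by
    rw [hqdef]; exact (EReal.coe_toReal hv0 hbv0).symm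
  -- real inequality (a)
  have ha : ∀ k, p k + c * ‖w k - x k‖ ^ 2 ≤ q + c * ‖v0 - x k‖ ^ 2 := by
    intro k
    have h2 := hw k v0
    rw [hφw k, hφv, ← EReal.coe_add, ← EReal.coe_add] at h2
    rw [hcdef]
    exact_mod_cast h2
  -- real inequality (b)
  have hb : ∀ k, m ≤ p k + c1 * ‖w k - x0‖ ^ 2 := by
    intro k
    have h2 := hmw (w k)
    rw [hφw k, ← EReal.coe_add] at h2
    exact_mod_cast h2
  -- constants
  obtain ⟨S, hSdef⟩ : ∃ S : ℝ, S = R + ‖x0‖ := ⟨_, rfl⟩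
  have hS : 0 ≤ S := by
    have := hR 0
    have := norm_nonneg (x 0)
    have := norm_nonneg x0
    rw [hSdef]; linarith
  obtain ⟨K, hKdef⟩ : ∃ K : ℝ, K = q - m + c * (‖v0‖ + R) ^ 2 := ⟨_, rfl⟩
  obtain ⟨A, hAdef⟩ : ∃ A : ℝ, A = c - c1 := ⟨_, rfl⟩
  obtain ⟨b, hbdef⟩ : ∃ b : ℝ, b = 2 * c1 * S := ⟨_, rfl⟩
  have hb0 : 0 ≤ b := by rw [hbdef]; positivity
  obtain ⟨Kp, hKpdef⟩ : ∃ Kp : ℝ, Kp = max (K + c1 * S ^ 2) 0 := ⟨_, rfl⟩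
  have hKp0 : 0 ≤ Kp := by rw [hKpdef]; exact le_max_right _ _
  obtain ⟨B, hBdef⟩ : ∃ B : ℝ, B = (2 * A * Kp + b ^ 2) / A ^ 2 := ⟨_, rfl⟩
  have hApos : 0 < A := by rw [hAdef]; exact hA
  refine ⟨Real.sqrt B + R, fun k => ?_⟩
  obtain ⟨t, htdef⟩ : ∃ t : ℝ, t = ‖w k - x k‖ := ⟨_, rfl⟩
  have ht0 : 0 ≤ t := htdef ▸ norm_nonneg _
  have hxk : ‖x k‖ ≤ R := hR k
  have hv0b : ‖v0 - x k‖ ≤ ‖v0‖ + R := le_trans (norm_sub_le _ _) (by linarith)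
  have hwx0 : ‖w k - x0‖ ≤ t + S := by
    have h1' : ‖w k - x0‖ ≤ ‖w k - x k‖ + ‖x k - x0‖ := norm_sub_le_norm_sub_add_norm_sub _ _ _
    have h2' : ‖x k - x0‖ ≤ ‖x k‖ + ‖x0‖ := norm_sub_le _ _
    rw [hSdef, htdef]; linarith
  have hsq1 : c * ‖v0 - x k‖ ^ 2 ≤ c * (‖v0‖ + R) ^ 2 :=
    mul_le_mul_of_nonneg_left (pow_le_pow_left₀ (norm_nonneg _) hv0b 2) hcpos.le
  have hsq2 : c1 * ‖w k - x0‖ ^ 2 ≤ c1 * (t + S) ^ 2 :=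
    mul_le_mul_of_nonneg_left (pow_le_pow_left₀ (norm_nonneg _) hwx0 2) hc1pos.le
  have hquad : A * t ^ 2 ≤ Kp + b * t := by
    have h1' := ha k
    have h2' := hb k
    rw [← htdef] at h1'
    have hKle : K + c1 * S ^ 2 ≤ Kp := hKpdef ▸ le_max_left _ _
    rw [hKdef] at hKle
    rw [hAdef, hbdef]
    nlinarith [hsq1, hsq2]
  have htB : t ^ 2 ≤ B := hBdef ▸ aux_quad_bound A b Kp t hApos hKp0 hb0 ht0 hquad
  have htsqrt : t ≤ Real.sqrt B := by
    calc t = Real.sqrt (t ^ 2) := (Real.sqrt_sq ht0).symm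
    _ ≤ Real.sqrt B := Real.sqrt_le_sqrt htB
  calc ‖w k‖ = ‖(w k - x k) + x k‖ := by rw [sub_add_cancel]
  _ ≤ ‖w k - x k‖ + ‖x k‖ := norm_add_le _ _
  _ ≤ Real.sqrt B + R := add_le_add (htdef ▸ htsqrt) hxk
end

section
/- Let X be a reflexive Banach space and let φ : X → ℝ ∪ {+∞} be a proper, weakly sequentially lower semicontinuous function. Let λ > 0 be such that there exist λ₁ > λ and x₀ ∈ X with e_{λ₁}φ(x₀) > −∞. If (x_k) is a sequence converging strongly to x̄ ∈ X, w_k ∈ P_λφ(x_k) for every k, and ŵ ∈ X is a weak sequential accumulation point of (w_k) (i.e., some subsequence of (w_k) converges weakly to ŵ), then ŵ ∈ P_λφ(x̄). -/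
open Filter Topology

variable {X : Type*}

private lemma ereal_sub_of_add_le (a : EReal) (y z : ℝ) (h : a + (y : EReal) ≤ (z : EReal)) :
    a ≤ ((z - y : ℝ) : EReal) := by
  induction a using EReal.rec with
  | bot => exact bot_le
  | coe a =>
      rw [← EReal.coe_add, EReal.coe_le_coe_iff] at h
      exact EReal.coe_le_coe_iff.2 (by linarith)
  | top =>
      rw [EReal.top_add_coe] at h
      exact absurd h (by simp)

/-- every weak sequential accumulation point of proximal points along a
strongly convergent sequence of base points belongs to `P_λφ(x̄)`. -/
theorem statement7 [NormedAddCommGroup X] [NormedSpace ℝ X] [CompleteSpace X]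
    (hrefl : SeqReflexive X)
    (φ : X → EReal) (hproper : IsProper φ) (hwlsc : WeakSeqLSC φ)
    (lam lam1 : ℝ) (x0 : X) (h0 : 0 < lam) (h1 : lam < lam1)
    (hfin : moreauEnv lam1 φ x0 ≠ ⊥)
    (x : ℕ → X) (xb : X) (hx : Tendsto x atTop (𝓝 xb))
    (w : ℕ → X) (hw : ∀ k, w k ∈ proxSet lam φ (x k))
    (wh : X) (s : ℕ → ℕ) (hs : StrictMono s) (hconv : WeakConv (w ∘ s) wh) :
    wh ∈ proxSet lam φ xb := by
  intro v
  set c : ℝ := 1 / (2 * lam) with hcdef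
  have hc : 0 < c := by positivity
  by_cases htop : φ v = ⊤
  · rw [htop, EReal.top_add_coe]
    exact le_top
  · set pv : ℝ := (φ v).toReal with hpvdef
    have hpv : φ v = (pv : EReal) := (EReal.coe_toReal htop (hproper.2 v)).symm
    set r : ℝ := ‖wh - xb‖ with hrdef
    have hr0 : 0 ≤ r := norm_nonneg _
    -- a functional attaining the norm of wh - xb
    obtain ⟨f, hf1, hf2⟩ : ∃ f : X →L[ℝ] ℝ, (∀ z : X, f z ≤ ‖z‖) ∧ f (wh - xb) = r := by
      rcases eq_or_ne wh xb with h | h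
      · exact ⟨0, fun z => by simp [norm_nonneg], by simp [h, hrdef, sub_self]⟩
      · obtain ⟨g, hg1, hg2⟩ := exists_dual_vector ℝ (wh - xb) (norm_ne_zero_iff.2 (sub_ne_zero.2 h))
        refine ⟨g, fun z => ?_, by exact_mod_cast hg2⟩
        calc g z ≤ |g z| := le_abs_self _
        _ ≤ ‖g‖ * ‖z‖ := g.le_opNorm z
        _ = ‖z‖ := by rw [hg1, one_mul]
    have hxs : Tendsto (fun k => x (s k)) atTop (𝓝 xb) := hx.comp hs.tendsto_atTop
    have hg : Tendsto (fun k => f (w (s k)) - f (x (s k))) atTop (𝓝 r) := by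
      have h1' : Tendsto (fun k => f (w (s k))) atTop (𝓝 (f wh)) := hconv f
      have h2' : Tendsto (fun k => f (x (s k))) atTop (𝓝 (f xb)) :=
        (f.continuous.tendsto xb).comp hxs
      have := h1'.sub h2'
      rwa [← map_sub, hf2] at this
    have hnv : Tendsto (fun k => ‖v - x (s k)‖ ^ 2) atTop (𝓝 (‖v - xb‖ ^ 2)) :=
      ((hxs.const_sub v).norm).pow 2
    -- main eventual bound
    have key : ∀ ε : ℝ, 0 < ε →
        φ wh ≤ ((pv + c * (‖v - xb‖ ^ 2 + ε) - c * (max (r - ε) 0) ^ 2 : ℝ) : EReal) := by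
      intro ε hε
      set t : ℝ := max (r - ε) 0 with htdef
      have ht0 : 0 ≤ t := le_max_right _ _
      have E1 : ∀ᶠ k in atTop, r - ε < f (w (s k)) - f (x (s k)) :=
        hg.eventually (eventually_gt_nhds (by linarith))
      have E2 : ∀ᶠ k in atTop, ‖v - x (s k)‖ ^ 2 < ‖v - xb‖ ^ 2 + ε :=
        hnv.eventually (eventually_lt_nhds (by linarith))
      have EV : ∀ᶠ k in atTop,
          φ (w (s k)) ≤ ((pv + c * (‖v - xb‖ ^ 2 + ε) - c * t ^ 2 : ℝ) : EReal) := by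
        filter_upwards [E1, E2] with k h1k h2k
        have hd : t ≤ ‖w (s k) - x (s k)‖ := by
          have : f (w (s k)) - f (x (s k)) ≤ ‖w (s k) - x (s k)‖ := by
            have := hf1 (w (s k) - x (s k))
            rwa [map_sub] at this
          have hnn : (0:ℝ) ≤ ‖w (s k) - x (s k)‖ := norm_nonneg _
          exact max_le (by linarith) hnn
        have hd2 : c * t ^ 2 ≤ c * ‖w (s k) - x (s k)‖ ^ 2 := by
          have := pow_le_pow_left₀ ht0 hd 2
          nlinarith
        have hstep : φ (w (s k)) + ((c * t ^ 2 : ℝ) : EReal)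
            ≤ ((pv + c * (‖v - xb‖ ^ 2 + ε) : ℝ) : EReal) := by
          calc φ (w (s k)) + ((c * t ^ 2 : ℝ) : EReal)
              ≤ φ (w (s k)) + ((c * ‖w (s k) - x (s k)‖ ^ 2 : ℝ) : EReal) :=
                add_le_add le_rfl (EReal.coe_le_coe_iff.2 hd2)
            _ ≤ φ v + ((c * ‖v - x (s k)‖ ^ 2 : ℝ) : EReal) := hw (s k) v
            _ = ((pv + c * ‖v - x (s k)‖ ^ 2 : ℝ) : EReal) := by
                rw [hpv, ← EReal.coe_add]
            _ ≤ ((pv + c * (‖v - xb‖ ^ 2 + ε) : ℝ) : EReal) := by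
                apply EReal.coe_le_coe_iff.2
                nlinarith
        exact ereal_sub_of_add_le _ _ _ hstep
      have hlim : liminf (fun k => φ (w (s k))) atTop
          ≤ ((pv + c * (‖v - xb‖ ^ 2 + ε) - c * t ^ 2 : ℝ) : EReal) :=
        liminf_le_of_frequently_le' EV.frequently
      exact le_trans (hwlsc wh (w ∘ s) hconv) hlim
    -- conclude by letting ε → 0
    rw [hpv, ← EReal.coe_add]
    have htend : Tendsto
        (fun ε : ℝ => ((pv + c * (‖v - xb‖ ^ 2 + ε) - c * (max (r - ε) 0) ^ 2 + c * r ^ 2 : ℝ) : EReal))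
        (𝓝[>] (0:ℝ)) (𝓝 ((pv + c * ‖v - xb‖ ^ 2 : ℝ) : EReal)) := by
      rw [EReal.tendsto_coe]
      have hcont : Continuous (fun ε : ℝ =>
          pv + c * (‖v - xb‖ ^ 2 + ε) - c * (max (r - ε) 0) ^ 2 + c * r ^ 2) := by
        fun_prop
      have : Tendsto
          (fun ε : ℝ => pv + c * (‖v - xb‖ ^ 2 + ε) - c * (max (r - ε) 0) ^ 2 + c * r ^ 2)
          (𝓝[>] (0:ℝ))
          (𝓝 (pv + c * (‖v - xb‖ ^ 2 + 0) - c * (max (r - 0) 0) ^ 2 + c * r ^ 2)) :=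
        (hcont.tendsto 0).mono_left nhdsWithin_le_nhds
      have hval : pv + c * (‖v - xb‖ ^ 2 + 0) - c * (max (r - 0) 0) ^ 2 + c * r ^ 2
          = pv + c * ‖v - xb‖ ^ 2 := by
        rw [sub_zero, max_eq_left hr0]; ring
      rwa [hval] at this
    refine ge_of_tendsto htend ?_
    filter_upwards [self_mem_nhdsWithin] with ε hε
    have := key ε hε
    calc φ wh + ((c * ‖wh - xb‖ ^ 2 : ℝ) : EReal)
        ≤ ((pv + c * (‖v - xb‖ ^ 2 + ε) - c * (max (r - ε) 0) ^ 2 : ℝ) : EReal)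
          + ((c * r ^ 2 : ℝ) : EReal) := by
          exact add_le_add this (by rw [hrdef])
      _ = ((pv + c * (‖v - xb‖ ^ 2 + ε) - c * (max (r - ε) 0) ^ 2 + c * r ^ 2 : ℝ) : EReal) := by
          rw [← EReal.coe_add]
end

section
/- Let X be a Banach space, let φ : X → ℝ ∪ {+∞} be a proper lower semicontinuous function, let x̄ ∈ dom φ, and let λ > 0. If x̄ is a local minimizer of the Moreau envelope e_λφ and ȳ ∈ P_λφ(x̄), then ȳ = x̄; consequently P_λφ(x̄) ⊆ {x̄}. -/
open Filter Topology

variable {X : Type*}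

private lemma statement10_aux [NormedAddCommGroup X] [NormedSpace ℝ X]
    (φ : X → EReal) (hproper : IsProper φ)
    (xb : X) (hdom : φ xb ≠ ⊤) (lam : ℝ) (hlam : 0 < lam)
    (hmin : LocalMin (moreauEnv lam φ) xb)
    (w : X) (hw : w ∈ proxSet lam φ xb) : w = xb := by
  set c : ℝ := 1 / (2 * lam) with hc_def
  have hc : 0 < c := by positivity
  set d : ℝ := ‖w - xb‖ with hd_def
  have hd0 : 0 ≤ d := norm_nonneg _
  -- basic inequality from prox at v = xb
  have h1 : φ w + ((c * d ^ 2 : ℝ) : EReal) ≤ φ xb := by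
    have h := hw xb
    simpa [hc_def, hd_def, sub_self, norm_zero] using h
  have hwtop : φ w ≠ ⊤ := by
    intro h
    rw [h, EReal.top_add_coe] at h1
    exact hdom (top_le_iff.mp h1)
  have hwbot : φ w ≠ ⊥ := hproper.2 w
  set r : ℝ := (φ w).toReal with hr_def
  have hr : φ w = (r : EReal) := (EReal.coe_toReal hwtop hwbot).symm
  -- the Moreau envelope value at xb
  have hE : moreauEnv lam φ xb = ((r + c * d ^ 2 : ℝ) : EReal) := by
    apply le_antisymm
    · have := iInf_le (fun v : X => φ v + ((c * ‖v - xb‖ ^ 2 : ℝ) : EReal)) w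
      rw [hr, ← EReal.coe_add] at this
      exact this
    · apply le_iInf
      intro v
      have := hw v
      rw [hr, ← EReal.coe_add] at this
      exact this
  by_contra hne
  have hd : 0 < d := by
    rw [hd_def]
    simpa [sub_eq_zero] using hne
  obtain ⟨ε, hε, hloc⟩ := hmin
  set t : ℝ := min (1/2) (ε / (2 * d)) with ht_def
  have ht0 : 0 < t := lt_min (by norm_num) (by positivity)
  have ht1 : t ≤ 1/2 := min_le_left _ _
  set xt : X := xb + t • (w - xb) with hxt_def
  have hxtd : ‖xt - xb‖ = t * d := by
    rw [hxt_def]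
    simp [norm_smul, abs_of_pos ht0, hd_def]
  have hxtε : ‖xt - xb‖ < ε := by
    rw [hxtd]
    have : t ≤ ε / (2 * d) := min_le_right _ _
    calc t * d ≤ (ε / (2 * d)) * d := by nlinarith
    _ = ε / 2 := by field_simp
    _ < ε := by linarith
  have hwxt : ‖w - xt‖ = (1 - t) * d := by
    have : w - xt = (1 - t) • (w - xb) := by
      rw [hxt_def]
      rw [sub_smul, one_smul]
      abel
    rw [this, norm_smul, Real.norm_eq_abs, abs_of_pos (by linarith : (0:ℝ) < 1 - t), hd_def]
  have h2 : moreauEnv lam φ xt ≤ ((r + c * ((1 - t) * d) ^ 2 : ℝ) : EReal) := by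
    have := iInf_le (fun v : X => φ v + ((c * ‖v - xt‖ ^ 2 : ℝ) : EReal)) w
    rw [hr, ← EReal.coe_add, hwxt] at this
    exact this
  have h3 : moreauEnv lam φ xb ≤ moreauEnv lam φ xt := hloc xt hxtε
  rw [hE] at h3
  have h4 : ((r + c * d ^ 2 : ℝ) : EReal) ≤ ((r + c * ((1 - t) * d) ^ 2 : ℝ) : EReal) :=
    le_trans h3 h2
  have h5 : r + c * d ^ 2 ≤ r + c * ((1 - t) * d) ^ 2 := EReal.coe_le_coe_iff.mp h4
  have h6 : 0 < c * d ^ 2 := by positivity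
  have h7 : 0 < t * (2 - t) := mul_pos ht0 (by linarith)
  nlinarith [mul_pos h6 h7, h5]

/-- if `x̄` is a local minimizer of `e_λφ` and `ȳ ∈ P_λφ(x̄)`, then
`ȳ = x̄`; consequently `P_λφ(x̄) ⊆ {x̄}`. -/
theorem statement10 [NormedAddCommGroup X] [NormedSpace ℝ X] [CompleteSpace X]
    (φ : X → EReal) (hproper : IsProper φ) (hlsc : LowerSemicontinuous φ)
    (xb : X) (hdom : φ xb ≠ ⊤) (lam : ℝ) (hlam : 0 < lam)
    (hmin : LocalMin (moreauEnv lam φ) xb)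
    (yb : X) (hyb : yb ∈ proxSet lam φ xb) :
    yb = xb ∧ proxSet lam φ xb ⊆ {xb} := by
  refine ⟨statement10_aux φ hproper xb hdom lam hlam hmin yb hyb, ?_⟩
  intro w hw
  exact statement10_aux φ hproper xb hdom lam hlam hmin w hw
end

section
/- Let X be a Banach space, let φ : X → ℝ ∪ {+∞} be a proper lower semicontinuous function, let x̄ ∈ dom φ, and let λ > 0. If the proximal set P_λφ(x̄) is nonempty and x̄ is a local minimizer of the Moreau envelope e_λφ, then x̄ is a local minimizer of φ. -/
open Filter Topology

variable {X : Type*}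

/-- if `P_λφ(x̄)` is nonempty and `x̄` is a local minimizer of `e_λφ`,
then `x̄` is a local minimizer of `φ`. -/
theorem statement11 [NormedAddCommGroup X] [NormedSpace ℝ X] [CompleteSpace X]
    (φ : X → EReal) (hproper : IsProper φ) (hlsc : LowerSemicontinuous φ)
    (xb : X) (hdom : φ xb ≠ ⊤) (lam : ℝ) (hlam : 0 < lam)
    (hne : (proxSet lam φ xb).Nonempty)
    (hmin : LocalMin (moreauEnv lam φ) xb) :
    LocalMin φ xb := by
  obtain ⟨wb, hwb⟩ := hne
  obtain ⟨ε, hε, hloc⟩ := hmin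
  have hcpos : 0 < 1 / (2 * lam) := by positivity
  -- φ wb is finite
  have hwtop : φ wb ≠ ⊤ := by
    intro htop
    have h := hwb xb
    rw [htop] at h
    simp only [sub_self, norm_zero] at h
    rw [EReal.top_add_coe] at h
    have hz : ((1 / (2 * lam) * (0 : ℝ) ^ 2 : ℝ) : EReal) = 0 := by norm_num
    rw [hz, add_zero] at h
    exact hdom (top_le_iff.mp h)
  have hwbot : φ wb ≠ ⊥ := hproper.2 wb
  obtain ⟨r, hr⟩ : ∃ r : ℝ, φ wb = (r : EReal) :=
    ⟨(φ wb).toReal, (EReal.coe_toReal hwtop hwbot).symm⟩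
  -- show wb = xb
  have hd : wb = xb := by
    by_contra hne'
    have hdpos : 0 < ‖wb - xb‖ := by
      simpa [norm_pos_iff, sub_eq_zero] using hne'
    set d : ℝ := ‖wb - xb‖ with hdef
    set t : ℝ := min (1 / 2) (ε / (2 * d)) with htdef
    have ht0 : 0 < t := lt_min (by norm_num) (by positivity)
    have ht1 : t < 1 := lt_of_le_of_lt (min_le_left _ _) (by norm_num)
    set xt : X := xb + t • (wb - xb) with hxtdef
    have hxt : ‖xt - xb‖ = t * d := by
      simp [hxtdef, norm_smul, abs_of_pos ht0, hdef]
    have hlt : ‖xt - xb‖ < ε := by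
      rw [hxt]
      calc t * d ≤ (ε / (2 * d)) * d :=
            mul_le_mul_of_nonneg_right (min_le_right _ _) hdpos.le
        _ = ε / 2 := by field_simp
        _ < ε := by linarith
    have h1 : moreauEnv lam φ xb ≤ moreauEnv lam φ xt := hloc xt hlt
    have h2 : φ wb + ((1 / (2 * lam) * d ^ 2 : ℝ) : EReal) ≤ moreauEnv lam φ xb :=
      le_iInf fun v => hwb v
    have hnorm : ‖wb - xt‖ = (1 - t) * d := by
      have heq : wb - xt = (1 - t) • (wb - xb) := by
        rw [hxtdef, sub_smul, one_smul]
        abel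
      rw [heq, norm_smul, Real.norm_eq_abs, abs_of_pos (by linarith : (0:ℝ) < 1 - t)]
    have h3 : moreauEnv lam φ xt ≤ φ wb + ((1 / (2 * lam) * ((1 - t) * d) ^ 2 : ℝ) : EReal) := by
      have := iInf_le (fun w => φ w + ((1 / (2 * lam) * ‖w - xt‖ ^ 2 : ℝ) : EReal)) wb
      rw [hnorm] at this
      exact this
    have hkey : ((r + 1 / (2 * lam) * d ^ 2 : ℝ) : EReal)
        ≤ ((r + 1 / (2 * lam) * ((1 - t) * d) ^ 2 : ℝ) : EReal) := by
      rw [EReal.coe_add, EReal.coe_add, ← hr]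
      exact le_trans h2 (le_trans h1 h3)
    have hkey' := EReal.coe_le_coe_iff.mp hkey
    nlinarith [mul_pos (mul_pos hcpos (mul_pos hdpos hdpos)) (mul_pos ht0 (by linarith : (0:ℝ) < 2 - t))]
  subst hd
  have hz : ((1 / (2 * lam) * (0 : ℝ) ^ 2 : ℝ) : EReal) = 0 := by norm_num
  have hwb' : ∀ v : X, φ wb ≤ φ v + ((1 / (2 * lam) * ‖v - wb‖ ^ 2 : ℝ) : EReal) := by
    intro v
    have h := hwb v
    simp only [sub_self, norm_zero] at h
    rw [hz, add_zero] at h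
    exact h
  refine ⟨ε, hε, fun x hx => ?_⟩
  calc φ wb ≤ moreauEnv lam φ wb := le_iInf fun v => hwb' v
    _ ≤ moreauEnv lam φ x := hloc x hx
    _ ≤ φ x := by
        have h := iInf_le (fun w => φ w + ((1 / (2 * lam) * ‖w - x‖ ^ 2 : ℝ) : EReal)) x
        simp only [sub_self, norm_zero] at h
        rw [hz, add_zero] at h
        exact h
end

section
/- Let X be a Hilbert space, let φ : X → ℝ ∪ {+∞} be a proper, prox-bounded, lower semicontinuous function, let x̄ ∈ X, let σ ≠ 0, and define the quadratically σ-shifted function ψ(x) := φ(x) − (σ/2)‖x − x̄‖². Then for all λ ∈ (0, 1/|σ|) and all x ∈ X one has the equality (of values in ℝ ∪ {−∞}): e_λφ(x) = e_{λ/(1+σλ)}ψ( (x + σλ x̄)/(1 + σλ) ) + (σ/(2(1+σλ)))‖x − x̄‖². -/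
open Filter Topology

variable {X : Type*}

/-- shift a real constant out of an `EReal` infimum -/
theorem iInf_add_coe {ι : Sort*} [Nonempty ι] (G : ι → EReal) (c : ℝ) :
    ⨅ w, (G w + (c : EReal)) = (⨅ w, G w) + c := by
  apply le_antisymm
  · rw [← EReal.sub_le_iff_le_add (.inl (EReal.coe_ne_bot c)) (.inl (EReal.coe_ne_top c))]
    refine le_iInf fun w => ?_
    calc (⨅ w, (G w + (c : EReal))) - c ≤ (G w + c) - c :=
          EReal.sub_le_sub (iInf_le _ w) le_rfl
      _ = G w := EReal.add_sub_cancel_right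
  · exact le_iInf fun w => add_le_add (iInf_le _ w) le_rfl

theorem keyReal {X : Type*} [NormedAddCommGroup X] [InnerProductSpace ℝ X]
    (a b : X) (s l t : ℝ) (ht : t = 1 + s*l) (hl : l ≠ 0) (ht0 : t ≠ 0) :
    -(s/2) * ‖b‖^2 + ((1/(2*(l/t))) * ‖t⁻¹ • (a + (s*l) • b)‖^2
      + (s/(2*t)) * ‖b - a‖^2) = (1/(2*l)) * ‖a‖^2 := by
  have h1 : ‖t⁻¹ • (a + (s*l) • b)‖^2 = (t⁻¹)^2 * ‖a + (s*l) • b‖^2 := by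
    rw [norm_smul, mul_pow, Real.norm_eq_abs, sq_abs]
  rw [h1, norm_add_sq_real, norm_sub_sq_real, inner_smul_right,
    real_inner_comm b a, norm_smul, Real.norm_eq_abs, mul_pow, sq_abs]
  subst ht
  field_simp
  ring

/-- Moreau envelope of `φ` expressed via the envelope of the quadratically
`σ`-shifted function `ψ(x) = φ(x) − (σ/2)‖x − x̄‖²`, for `λ ∈ (0, 1/|σ|)`. -/
theorem statement12 [NormedAddCommGroup X] [InnerProductSpace ℝ X] [CompleteSpace X]
    (φ : X → EReal) (hproper : IsProper φ) (hpb : ProxBounded φ)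
    (hlsc : LowerSemicontinuous φ)
    (xb : X) (σ : ℝ) (hσ : σ ≠ 0)
    (ψ : X → EReal) (hψ : ∀ x, ψ x = φ x + ((-(σ / 2) * ‖x - xb‖ ^ 2 : ℝ) : EReal))
    (lam : ℝ) (h0 : 0 < lam) (h1 : lam < 1 / |σ|) (x : X) :
    moreauEnv lam φ x =
      moreauEnv (lam / (1 + σ * lam)) ψ ((1 + σ * lam)⁻¹ • (x + (σ * lam) • xb))
        + (((σ / (2 * (1 + σ * lam))) * ‖x - xb‖ ^ 2 : ℝ) : EReal) := by
  have habs : 0 < |σ| := abs_pos.2 hσ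
  have hsl : |σ| * lam < 1 := by
    rw [lt_div_iff₀ habs] at h1; linarith
  have htpos : (0:ℝ) < 1 + σ * lam := by
    have := neg_abs_le σ
    nlinarith
  have ht0 : (1 + σ * lam) ≠ 0 := ne_of_gt htpos
  set t : ℝ := 1 + σ * lam with htdef
  set y : X := t⁻¹ • (x + (σ * lam) • xb) with hydef
  set c : ℝ := (σ / (2 * t)) * ‖x - xb‖ ^ 2 with hcdef
  rw [moreauEnv, moreauEnv, ← iInf_add_coe]
  refine iInf_congr fun w => ?_
  -- vector identity
  have hvec : w - y = t⁻¹ • ((w - x) + (σ * lam) • (w - xb)) := by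
    rw [hydef, htdef]
    match_scalars <;> field_simp <;> exact (div_self ht0).symm
  have hba : (w - xb) - (w - x) = x - xb := by abel
  have hkey : -(σ/2) * ‖w - xb‖^2 + ((1/(2*(lam/t))) * ‖w - y‖^2 + c) =
      (1/(2*lam)) * ‖w - x‖^2 := by
    rw [hvec, hcdef, ← hba]
    exact keyReal (w - x) (w - xb) σ lam t htdef (ne_of_gt h0) ht0
  rw [hψ w]
  rcases eq_or_ne (φ w) ⊤ with hw | hw
  · rw [hw]
    simp only [EReal.top_add_coe]
  · lift φ w to ℝ using ⟨hw, hproper.2 w⟩ with p hp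
    norm_cast
    linarith [hkey]
end

section
/- Let X be a Hilbert space, let φ : X → ℝ ∪ {+∞} be a proper, prox-bounded, lower semicontinuous function, let x̄ ∈ X, let σ ≠ 0, and define the quadratically σ-shifted function ψ(x) := φ(x) − (σ/2)‖x − x̄‖². Then for all λ ∈ (0, 1/|σ|) and all x ∈ X one has the equality (of values in ℝ ∪ {−∞}): e_λψ(x) = e_{λ/(1−σλ)}φ( (x − σλ x̄)/(1 − σλ) ) − (σ/(2(1−σλ)))‖x − x̄‖². -/
open Filter Topology

variable {X : Type*}

lemma ereal_iInf_add_coe {ι : Type*} (g : ι → EReal) (c : ℝ) :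
    (⨅ i, g i + (c : EReal)) = (⨅ i, g i) + c := by
  cases isEmpty_or_nonempty ι with
  | inl h => simp [iInf_of_empty]
  | inr h =>
    apply le_antisymm
    · rw [← EReal.sub_le_iff_le_add (by simp) (by simp)]
      refine le_iInf fun i => ?_
      rw [EReal.sub_le_iff_le_add (by simp) (by simp)]
      exact iInf_le _ i
    · exact le_iInf fun i => add_le_add_left (iInf_le _ i) _

lemma quad_shift_identity {Y : Type*} [NormedAddCommGroup Y] [InnerProductSpace ℝ Y]
    (σ lam : ℝ) (hl : lam ≠ 0) (ht : (1 - σ*lam) ≠ 0) (w x xb : Y) :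
    -(σ/2) * ‖w - xb‖^2 + (1/(2*lam)) * ‖w - x‖^2
      = (1/(2*(lam/(1-σ*lam)))) * ‖w - (1-σ*lam)⁻¹ • (x - (σ*lam) • xb)‖^2
        + (-(σ/(2*(1-σ*lam)))) * ‖x - xb‖^2 := by
  set t := 1 - σ*lam with htdef
  have hw : w - t⁻¹ • (x - (σ*lam) • xb) = t⁻¹ • (t • (w - xb) - (x - xb)) := by
    match_scalars <;> field_simp <;> rw [htdef] <;> ring
  rw [show w - x = (w - xb) - (x - xb) by abel, hw, norm_smul, mul_pow,
    norm_sub_sq_real (t • (w-xb)), norm_smul t,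
    real_inner_smul_left, norm_sub_sq_real (w-xb) (x-xb)]
  simp only [Real.norm_eq_abs, mul_pow, sq_abs]
  field_simp
  rw [htdef]
  ring

/-- Moreau envelope of the quadratically `σ`-shifted function
`ψ(x) = φ(x) − (σ/2)‖x − x̄‖²` expressed via the envelope of `φ`, for `λ ∈ (0, 1/|σ|)`. -/
theorem statement13 [NormedAddCommGroup X] [InnerProductSpace ℝ X] [CompleteSpace X]
    (φ : X → EReal) (hproper : IsProper φ) (hpb : ProxBounded φ)
    (hlsc : LowerSemicontinuous φ)
    (xb : X) (σ : ℝ) (hσ : σ ≠ 0)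
    (ψ : X → EReal) (hψ : ∀ x, ψ x = φ x + ((-(σ / 2) * ‖x - xb‖ ^ 2 : ℝ) : EReal))
    (lam : ℝ) (h0 : 0 < lam) (h1 : lam < 1 / |σ|) (x : X) :
    moreauEnv lam ψ x =
      moreauEnv (lam / (1 - σ * lam)) φ ((1 - σ * lam)⁻¹ • (x - (σ * lam) • xb))
        + ((-(σ / (2 * (1 - σ * lam))) * ‖x - xb‖ ^ 2 : ℝ) : EReal) := by
  have habs : 0 < |σ| := abs_pos.mpr hσ
  have hsl : σ * lam < 1 := by
    calc σ * lam ≤ |σ * lam| := le_abs_self _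
    _ = |σ| * lam := by rw [abs_mul, abs_of_pos h0]
    _ < 1 := by rw [← lt_div_iff₀' habs]; exact h1
  have ht : (1 - σ * lam) ≠ 0 := by linarith
  have hl : lam ≠ 0 := h0.ne'
  have key : ∀ w : X, ψ w + (((1 / (2 * lam)) * ‖w - x‖ ^ 2 : ℝ) : EReal)
      = (φ w + (((1 / (2 * (lam / (1 - σ * lam)))) *
            ‖w - (1 - σ * lam)⁻¹ • (x - (σ * lam) • xb)‖ ^ 2 : ℝ) : EReal))
        + ((-(σ / (2 * (1 - σ * lam))) * ‖x - xb‖ ^ 2 : ℝ) : EReal) := by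
    intro w
    rw [hψ w, add_assoc, add_assoc, ← EReal.coe_add, ← EReal.coe_add,
      quad_shift_identity σ lam hl ht w x xb]
  unfold moreauEnv
  simp_rw [key]
  rw [ereal_iInf_add_coe]
end

section
/- Let X be a Hilbert space and let φ : X → ℝ ∪ {+∞} be a proper, prox-bounded, lower semicontinuous function that is weakly sequentially lower semicontinuous, and let x̄ ∈ dom φ. If x̄ is a strong local minimizer of φ with modulus σ > 0, then there exists λ̄ > 0 such that for every λ ∈ (0, λ̄) the point x̄ is a strong local minimizer of the Moreau envelope e_λφ with modulus σ/(1 + σλ). -/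
open Filter Topology

variable {X : Type*}

lemma quad_ineq {X : Type*} [NormedAddCommGroup X] [InnerProductSpace ℝ X]
    (σ lam : ℝ) (hσ : 0 < σ) (hlam : 0 < lam) (u v : X) :
    σ / (1 + σ * lam) / 2 * ‖v‖ ^ 2 ≤ σ / 2 * ‖u‖ ^ 2 + 1 / (2 * lam) * ‖u - v‖ ^ 2 := by
  have hs : (0:ℝ) < 1 + σ * lam := by positivity
  have h1 : (0:ℝ) ≤ ‖(1 + σ * lam) • u - v‖ ^ 2 := by positivity
  have e1 : ‖(1 + σ * lam) • u - v‖ ^ 2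
      = (1 + σ * lam) ^ 2 * ‖u‖ ^ 2 - 2 * ((1 + σ * lam) * inner ℝ u v) + ‖v‖ ^ 2 := by
    rw [@norm_sub_sq_real, norm_smul, real_inner_smul_left, Real.norm_eq_abs,
      abs_of_pos hs, mul_pow]
  have e2 : ‖u - v‖ ^ 2 = ‖u‖ ^ 2 - 2 * inner ℝ u v + ‖v‖ ^ 2 := norm_sub_sq_real u v
  have hkey : σ / 2 * ‖u‖ ^ 2 + 1 / (2 * lam) * ‖u - v‖ ^ 2
      - σ / (1 + σ * lam) / 2 * ‖v‖ ^ 2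
      = ‖(1 + σ * lam) • u - v‖ ^ 2 / (2 * lam * (1 + σ * lam)) := by
    rw [e1, e2]; field_simp; ring
  have h2 : (0:ℝ) ≤ ‖(1 + σ * lam) • u - v‖ ^ 2 / (2 * lam * (1 + σ * lam)) := by positivity
  linarith [hkey ▸ h2]

set_option maxHeartbeats 1000000 in
/-- a strong local minimizer of `φ` with modulus `σ > 0` is a strong local
minimizer of `e_λφ` with modulus `σ/(1 + σλ)` for all small `λ > 0`. -/
theorem statement15 [NormedAddCommGroup X] [InnerProductSpace ℝ X] [CompleteSpace X]
    (φ : X → EReal) (hproper : IsProper φ) (hpb : ProxBounded φ)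
    (hlsc : LowerSemicontinuous φ) (hwlsc : WeakSeqLSC φ)
    (xb : X) (hdom : φ xb ≠ ⊤)
    (σ : ℝ) (hσ : 0 < σ) (hmin : StrongLocalMin φ xb σ) :
    ∃ lamb > (0 : ℝ), ∀ lam : ℝ, 0 < lam → lam < lamb →
      StrongLocalMin (moreauEnv lam φ) xb (σ / (1 + σ * lam)) := by
  obtain ⟨ε, hε, hS⟩ := hmin
  obtain ⟨a0, b0, x0, hpb0⟩ := hpb
  set a' : ℝ := min a0 0 with ha'def
  have ha' : a' ≤ 0 := min_le_right _ _
  have hpb' : ∀ y : X, ((a' * ‖y - x0‖ ^ 2 + b0 : ℝ) : EReal) ≤ φ y := by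
    intro y
    refine le_trans (EReal.coe_le_coe_iff.mpr ?_) (hpb0 y)
    have : a' ≤ a0 := min_le_left _ _
    nlinarith [sq_nonneg ‖y - x0‖]
  set m : ℝ := (φ xb).toReal with hmdef
  have hm : φ xb = (m : EReal) := (EReal.coe_toReal hdom (hproper.2 xb)).symm
  set B : ℝ := 2 * a' * ‖xb - x0‖ ^ 2 + b0 with hBdef
  set K : ℝ := max (m + σ * ε ^ 2 / 8 - B) 1 with hKdef
  have hK : 0 < K := lt_of_lt_of_le one_pos (le_max_right _ _)
  have hA : (0:ℝ) < 1 - a' := by linarith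
  refine ⟨min (1 / (32 * (1 - a'))) (ε ^ 2 / (16 * K)), lt_min (by positivity) (by positivity),
    fun lam hlam hlt => ?_⟩
  have hlt1 : lam < 1 / (32 * (1 - a')) := hlt.trans_le (min_le_left _ _)
  have hlt2 : lam < ε ^ 2 / (16 * K) := hlt.trans_le (min_le_right _ _)
  have hmu1 : 2 * (1 - a') < 1 / (16 * lam) := by
    rw [lt_div_iff₀ (by positivity)]
    rw [lt_div_iff₀ (by positivity)] at hlt1
    nlinarith
  have hmu2 : K < ε ^ 2 / (16 * lam) := by
    rw [lt_div_iff₀ (by positivity)]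
    rw [lt_div_iff₀ (by positivity)] at hlt2
    nlinarith
  have hs : (0:ℝ) < 1 + σ * lam := by positivity
  refine ⟨ε / 2, by positivity, fun x hx => ?_⟩
  set c : ℝ := σ / (1 + σ * lam) / 2 * ‖x - xb‖ ^ 2 with hcdef
  -- bound c ≤ σ ε² / 8
  have hc : c ≤ σ * ε ^ 2 / 8 := by
    have h1 : σ / (1 + σ * lam) ≤ σ := div_le_self hσ.le (by nlinarith)
    have h2 : ‖x - xb‖ ^ 2 ≤ ε ^ 2 / 4 := by nlinarith [norm_nonneg (x - xb)]
    have h3 : (0:ℝ) ≤ σ / (1 + σ * lam) := by positivity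
    rw [hcdef]
    nlinarith [sq_nonneg ‖x - xb‖]
  -- pointwise lower bound on the envelope at x
  have key : ∀ w : X, ((m + c : ℝ) : EReal)
      ≤ φ w + (((1 / (2 * lam)) * ‖w - x‖ ^ 2 : ℝ) : EReal) := by
    intro w
    by_cases hw : ‖w - xb‖ < ε
    · have hE := hS w hw
      have hq := quad_ineq σ lam hσ hlam (w - xb) (x - xb)
      rw [sub_sub_sub_cancel_right] at hq
      calc ((m + c : ℝ) : EReal)
          ≤ ((m + σ / 2 * ‖w - xb‖ ^ 2 + 1 / (2 * lam) * ‖w - x‖ ^ 2 : ℝ) : EReal) := by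
            exact_mod_cast EReal.coe_le_coe_iff.mpr (by rw [hcdef] at *; linarith)
        _ = (φ xb + (((σ / 2) * ‖w - xb‖ ^ 2 : ℝ) : EReal))
              + (((1 / (2 * lam)) * ‖w - x‖ ^ 2 : ℝ) : EReal) := by
            rw [hm, ← EReal.coe_add, ← EReal.coe_add]
        _ ≤ φ w + (((1 / (2 * lam)) * ‖w - x‖ ^ 2 : ℝ) : EReal) :=
            add_le_add_left hE _
    · push_neg at hw
      have hE := hpb' w
      have f1 : ‖w - x0‖ ≤ ‖w - xb‖ + ‖xb - x0‖ := by
        simpa [dist_eq_norm] using dist_triangle w xb x0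
      have f2 : ‖w - xb‖ - ‖x - xb‖ ≤ ‖w - x‖ := by
        simpa [sub_sub_sub_cancel_right] using norm_sub_norm_le (w - xb) (x - xb)
      have h5 : ‖w - xb‖ / 2 ≤ ‖w - x‖ := by linarith
      have h5' : (‖w - xb‖ / 2) ^ 2 ≤ ‖w - x‖ ^ 2 := by
        apply pow_le_pow_left₀ (by positivity) h5
      have hqn : ‖w - xb‖ ^ 2 / 4 ≤ ‖w - x‖ ^ 2 := by nlinarith [h5']
      have hsq : ‖w - x0‖ ^ 2 ≤ 2 * ‖w - xb‖ ^ 2 + 2 * ‖xb - x0‖ ^ 2 := by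
        have h6 := mul_self_le_mul_self (norm_nonneg (w - x0)) f1
        nlinarith [h6, sq_nonneg (‖w - xb‖ - ‖xb - x0‖)]
      have s1 : 2 * a' * ‖w - xb‖ ^ 2 + 2 * a' * ‖xb - x0‖ ^ 2 ≤ a' * ‖w - x0‖ ^ 2 := by
        linarith [mul_le_mul_of_nonpos_left hsq ha']
      have s2 : 1 / (2 * lam) * (‖w - xb‖ ^ 2 / 4) ≤ 1 / (2 * lam) * ‖w - x‖ ^ 2 :=
        mul_le_mul_of_nonneg_left hqn (by positivity)
      have heq : 1 / (2 * lam) * (‖w - xb‖ ^ 2 / 4) = 2 * (1 / (16 * lam) * ‖w - xb‖ ^ 2) := by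
        field_simp; ring
      have hco : 0 < 2 * a' + 1 / (16 * lam) := by linarith
      have s3 : 1 / (16 * lam) * ‖w - xb‖ ^ 2
          ≤ 2 * a' * ‖w - xb‖ ^ 2 + 1 / (2 * lam) * (‖w - xb‖ ^ 2 / 4) := by
        rw [heq]
        nlinarith [mul_nonneg hco.le (sq_nonneg ‖w - xb‖)]
      have s4 : 1 / (16 * lam) * ε ^ 2 ≤ 1 / (16 * lam) * ‖w - xb‖ ^ 2 :=
        mul_le_mul_of_nonneg_left (by nlinarith) (by positivity)
      have s4' : 1 / (16 * lam) * ε ^ 2 = ε ^ 2 / (16 * lam) := one_div_mul_eq_div _ _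
      have s5 : m + σ * ε ^ 2 / 8 - B ≤ K := le_max_left _ _
      have hreal : m + c ≤ a' * ‖w - x0‖ ^ 2 + b0 + 1 / (2 * lam) * ‖w - x‖ ^ 2 := by
        rw [hBdef] at s5
        linarith [s4' ▸ s4]
      calc ((m + c : ℝ) : EReal)
          ≤ ((a' * ‖w - x0‖ ^ 2 + b0 + 1 / (2 * lam) * ‖w - x‖ ^ 2 : ℝ) : EReal) :=
            EReal.coe_le_coe_iff.mpr hreal
        _ = ((a' * ‖w - x0‖ ^ 2 + b0 : ℝ) : EReal)
              + (((1 / (2 * lam)) * ‖w - x‖ ^ 2 : ℝ) : EReal) := by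
            rw [← EReal.coe_add]
        _ ≤ φ w + (((1 / (2 * lam)) * ‖w - x‖ ^ 2 : ℝ) : EReal) :=
            add_le_add_left hE _
  have hub : moreauEnv lam φ xb ≤ (m : EReal) := by
    have h := iInf_le (fun w : X => φ w + (((1 / (2 * lam)) * ‖w - xb‖ ^ 2 : ℝ) : EReal)) xb
    simpa [moreauEnv, sub_self, hm] using h
  have hlb : ((m + c : ℝ) : EReal) ≤ moreauEnv lam φ x := le_iInf key
  calc moreauEnv lam φ xb + ((σ / (1 + σ * lam) / 2 * ‖x - xb‖ ^ 2 : ℝ) : EReal)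
      ≤ (m : EReal) + ((c : ℝ) : EReal) := add_le_add_left hub _
    _ = ((m + c : ℝ) : EReal) := (EReal.coe_add m c).symm
    _ ≤ moreauEnv lam φ x := hlb
end

section
/- Let X be a Hilbert space and let φ : X → ℝ ∪ {+∞} be a proper, prox-bounded, lower semicontinuous function, and let x̄ ∈ dom φ and σ > 0. Assume that there exists λ₀ > 0 such that P_λφ(x̄) ≠ ∅ for all λ ∈ (0, λ₀), and that there exists λ̄ > 0 such that for every λ ∈ (0, λ̄) the point x̄ is a strong local minimizer of the Moreau envelope e_λφ with modulus σ/(1 + σλ). Then x̄ is a strong local minimizer of φ with modulus σ. -/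
open Filter Topology

variable {X : Type*}

/-- if `P_λφ(x̄) ≠ ∅` for all small `λ > 0` and `x̄` is a strong local
minimizer of `e_λφ` with modulus `σ/(1 + σλ)` for all small `λ > 0`, then `x̄` is a
strong local minimizer of `φ` with modulus `σ`. -/
theorem statement16 [NormedAddCommGroup X] [InnerProductSpace ℝ X] [CompleteSpace X]
    (φ : X → EReal) (hproper : IsProper φ) (hpb : ProxBounded φ)
    (hlsc : LowerSemicontinuous φ)
    (xb : X) (hdom : φ xb ≠ ⊤) (σ : ℝ) (hσ : 0 < σ)
    (hne : ∃ lam0 > (0 : ℝ), ∀ lam : ℝ, 0 < lam → lam < lam0 → (proxSet lam φ xb).Nonempty)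
    (hmin : ∃ lamb > (0 : ℝ), ∀ lam : ℝ, 0 < lam → lam < lamb →
      StrongLocalMin (moreauEnv lam φ) xb (σ / (1 + σ * lam))) :
    StrongLocalMin φ xb σ := by
  obtain ⟨lam0, hlam0, hne⟩ := hne
  obtain ⟨lamb, hlamb, hmin⟩ := hmin
  set lam : ℝ := min lam0 lamb / 2 with hlamdef
  have hlam : 0 < lam := by positivity
  have hlt0 : lam < lam0 := by
    have := min_le_left lam0 lamb; simp only [hlamdef]; linarith
  have hltb : lam < lamb := by
    have := min_le_right lam0 lamb; simp only [hlamdef]; linarith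
  obtain ⟨w, hw⟩ := hne lam hlam hlt0
  obtain ⟨ε, hε, hsm⟩ := hmin lam hlam hltb
  have hden : 0 < 1 + σ * lam := by nlinarith
  have hc : 0 < 1 / (2 * lam) := by positivity
  -- φ w is a real number
  have hr : ∃ r : ℝ, φ xb = (r : ℝ) := by
    cases hx : φ xb with
    | top => exact absurd hx hdom
    | bot => exact absurd hx (hproper.2 xb)
    | coe r => exact ⟨r, rfl⟩
  obtain ⟨r, hrxb⟩ := hr
  -- Step 1: w = xb
  have hwxb : w = xb := by
    by_contra hne'
    have hd : 0 < ‖w - xb‖ := by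
      rw [norm_pos_iff, sub_ne_zero]; exact hne'
    set d : ℝ := ‖w - xb‖ with hddef
    -- φ w is real
    have hwv := hw xb
    simp only [sub_self, norm_zero] at hwv
    have hwv' : φ w + ((1 / (2 * lam) * d ^ 2 : ℝ) : EReal) ≤ (r : EReal) := by
      rw [hrxb] at hwv
      calc φ w + ((1 / (2 * lam) * d ^ 2 : ℝ) : EReal)
          ≤ (r : EReal) + ((1 / (2 * lam) * (0:ℝ) ^ 2 : ℝ) : EReal) := hwv
        _ = (r : EReal) := by norm_num
    have hwtop : φ w ≠ ⊤ := by
      intro h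
      rw [h, EReal.top_add_coe] at hwv'
      simp at hwv'
    obtain ⟨s, hs⟩ : ∃ s : ℝ, φ w = (s : ℝ) := by
      cases hx : φ w with
      | top => exact absurd hx hwtop
      | bot => exact absurd hx (hproper.2 w)
      | coe s => exact ⟨s, rfl⟩
    set t : ℝ := min (1/2) (ε / (2 * d)) with htdef
    have ht0 : 0 < t := by positivity
    have ht1 : t ≤ 1/2 := min_le_left _ _
    have htd : t * d < ε := by
      have h1 : t ≤ ε / (2 * d) := min_le_right _ _
      have : t * d ≤ (ε / (2 * d)) * d := by nlinarith
      have h2 : (ε / (2 * d)) * d = ε / 2 := by field_simp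
      nlinarith
    set xt : X := xb + t • (w - xb) with hxt
    have hnxt : ‖xt - xb‖ = t * d := by
      rw [hxt]; simp only [add_sub_cancel_left, norm_smul, Real.norm_eq_abs,
        abs_of_pos ht0, hddef]
    have hA : ((s + 1 / (2 * lam) * d ^ 2 : ℝ) : EReal) ≤ moreauEnv lam φ xb := by
      rw [moreauEnv]
      refine le_iInf fun v => ?_
      rw [EReal.coe_add, ← hs]
      exact hw v
    have hB : moreauEnv lam φ xb ≤ moreauEnv lam φ xt := by
      have := hsm xt (by rw [hnxt]; exact htd)
      refine le_trans ?_ this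
      exact le_add_of_nonneg_right (EReal.coe_nonneg.2 (by positivity))
    have hC : moreauEnv lam φ xt ≤ ((s + 1 / (2 * lam) * ((1 - t) * d) ^ 2 : ℝ) : EReal) := by
      rw [moreauEnv]
      have hnw : ‖w - xt‖ = (1 - t) * d := by
        have : w - xt = (1 - t) • (w - xb) := by
          rw [hxt]; module
        rw [this, norm_smul, Real.norm_eq_abs, abs_of_pos (by linarith : (0:ℝ) < 1 - t), hddef]
      calc moreauEnv lam φ xt ≤ φ w + ((1 / (2 * lam) * ‖w - xt‖ ^ 2 : ℝ) : EReal) :=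
            iInf_le _ w
        _ = ((s + 1 / (2 * lam) * ((1 - t) * d) ^ 2 : ℝ) : EReal) := by
            rw [hs, hnw, ← EReal.coe_add]
    have := EReal.coe_le_coe_iff.1 (le_trans hA (le_trans hB hC))
    have h2 : 0 < 2 * t - t ^ 2 := by nlinarith
    nlinarith [mul_pos (mul_pos hc (mul_pos hd hd)) h2]
  -- Step 2: global inequality
  subst hwxb
  have hglob : ∀ v : X, φ w ≤ φ v + ((1 / (2 * lam) * ‖v - w‖ ^ 2 : ℝ) : EReal) := by
    intro v
    have := hw v
    simp only [sub_self, norm_zero] at this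
    calc φ w = φ w + ((1 / (2 * lam) * (0:ℝ) ^ 2 : ℝ) : EReal) := by norm_num
      _ ≤ _ := this
  have hD : (r : EReal) ≤ moreauEnv lam φ w := by
    rw [moreauEnv, ← hrxb]
    exact le_iInf hglob
  -- Main argument
  refine ⟨ε / (1 + σ * lam), by positivity, fun x hx => ?_⟩
  set y : X := w + (1 + σ * lam) • (x - w) with hy
  have hny : ‖y - w‖ = (1 + σ * lam) * ‖x - w‖ := by
    rw [hy]; simp [norm_smul, Real.norm_eq_abs, abs_of_pos hden]
  have hnxy : ‖x - y‖ = σ * lam * ‖x - w‖ := by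
    have : x - y = (-(σ * lam)) • (x - w) := by rw [hy]; module
    rw [this, norm_smul, Real.norm_eq_abs, abs_neg, abs_of_pos (by positivity)]
  have hyε : ‖y - w‖ < ε := by
    rw [hny]
    calc (1 + σ * lam) * ‖x - w‖ < (1 + σ * lam) * (ε / (1 + σ * lam)) := by
          exact mul_lt_mul_of_pos_left hx hden
      _ = ε := by field_simp
  have hE := hsm y hyε
  have hF : moreauEnv lam φ y ≤ φ x + ((1 / (2 * lam) * ‖x - y‖ ^ 2 : ℝ) : EReal) :=
    iInf_le _ x
  have hchain : ((r + σ / (1 + σ * lam) / 2 * ‖y - w‖ ^ 2 : ℝ) : EReal)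
      ≤ φ x + ((1 / (2 * lam) * ‖x - y‖ ^ 2 : ℝ) : EReal) := by
    rw [EReal.coe_add]
    calc (r : EReal) + ((σ / (1 + σ * lam) / 2 * ‖y - w‖ ^ 2 : ℝ) : EReal)
        ≤ moreauEnv lam φ w + ((σ / (1 + σ * lam) / 2 * ‖y - w‖ ^ 2 : ℝ) : EReal) :=
          add_le_add_left hD _
      _ ≤ moreauEnv lam φ y := hE
      _ ≤ _ := hF
  rw [hrxb]
  -- key algebraic identity
  have hkey : r + σ / (1 + σ * lam) / 2 * ‖y - w‖ ^ 2
      = (r + σ / 2 * ‖x - w‖ ^ 2) + 1 / (2 * lam) * ‖x - y‖ ^ 2 := by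
    rw [hny, hnxy]
    have h1 : σ / (1 + σ * lam) * (1 + σ * lam) = σ := div_mul_cancel₀ _ (ne_of_gt hden)
    field_simp
    ring
  cases hxval : φ x with
  | top => exact le_top
  | bot => exact absurd hxval (hproper.2 x)
  | coe q =>
    rw [hxval, ← EReal.coe_add] at hchain
    rw [← EReal.coe_add]
    rw [EReal.coe_le_coe_iff] at hchain ⊢
    linarith [hchain, hkey]
end
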